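/- For a probability density p on (0,∞) with ∫₀^∞ p(u)/u du < ∞, the Laplace transform of T[p], where T[p](x) = (1/2)∫₀^x p(x−u) ∫_u^∞ (1/v) p(v) dv du + (1/2)∫_x^∞ (1/u) p(u) du, equals (1/(2s)) (p̂(s) + 1) ∫₀^s p̂(s') ds' for all s > 0. -/

import Mathlib

open MeasureTheory Measure Real Set

noncomputable def T (p : ℝ → ℝ) (x : ℝ) : ℝ :=
  (1/2) * (∫ u in (0:ℝ)..x, p (x - u) * ∫ v in Ioi u, p v / v)
    + (1/2) * ∫ u in Ioi x, p u / u

noncomputable def laplace (p : ℝ → ℝ) (s : ℝ) : ℝ :=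
  ∫ x in Ioi (0:ℝ), Real.exp (-(s * x)) * p x

lemma exp_int {c : ℝ} (hc : c ≠ 0) (b : ℝ) :
    ∫ t in (0:ℝ)..b, Real.exp (-(t*c)) = (1 - Real.exp (-(b*c)))/c := by
  have hder : ∀ t : ℝ, HasDerivAt (fun t : ℝ => -Real.exp (-(t*c))/c) (Real.exp (-(t*c))) t := by
    intro t
    have h1 : HasDerivAt (fun t : ℝ => -(t*c)) (-c) t := by
      have := ((hasDerivAt_id t).mul_const c).neg; rw [one_mul] at this; exact this
    have h2 : HasDerivAt (fun x => -(Real.exp (-(x*c))/c)) (-(Real.exp (-(t*c)) * -c / c)) t :=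
      (h1.exp.div_const c).neg
    convert h2 using 1
    · funext x; ring
    · field_simp
  rw [intervalIntegral.integral_eq_sub_of_hasDerivAt (fun t _ => hder t)
      ((Real.continuous_exp.comp (by continuity)).intervalIntegrable _ _)]
  simp
  ring

lemma norm_int_eq {μ : Measure ℝ} {f : ℝ → ℝ} (hf : ∀ x, 0 ≤ f x) :
    ∫ x, ‖f x‖ ∂μ = ∫ x, f x ∂μ := by
  congr 1; funext x; exact Real.norm_of_nonneg (hf x)

set_option maxHeartbeats 1000000 in
lemma main_g (g : ℝ → ℝ) (hm : Measurable g) (h0 : ∀ x, 0 ≤ g x)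
    (hz : ∀ x, x ≤ 0 → g x = 0) (hgi : Integrable g)
    (hone : ∫ x, g x = 1)
    (hq : Integrable (fun u => g u / u)) {s : ℝ} (hs : 0 < s) :
    laplace (T g) s = (1 / (2 * s)) * (laplace g s + 1) * ∫ s' in (0:ℝ)..s, laplace g s' := by
  -- basic facts
  have hq0 : ∀ u, 0 ≤ g u / u := by
    intro u
    rcases le_or_gt u 0 with h | h
    · rw [hz u h, zero_div]
    · exact div_nonneg (h0 u) h.le
  have hqm : Measurable (fun u : ℝ => g u / u) := hm.div measurable_id
  set Q : ℝ → ℝ := fun u => ∫ v in Ioi u, g v / v with hQdef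
  have hQanti : Antitone Q := by
    intro a b hab
    exact setIntegral_mono_set hq.integrableOn (ae_of_all _ hq0)
      ((Ioi_subset_Ioi hab).eventuallyLE)
  have hQm : Measurable Q := hQanti.measurable
  have hQ0 : ∀ u, 0 ≤ Q u := fun u => setIntegral_nonneg measurableSet_Ioi (fun v _ => hq0 v)
  set C : ℝ := ∫ u, g u / u with hCdef
  have hQle : ∀ u, Q u ≤ C := fun u => setIntegral_le_integral hq (ae_of_all _ hq0)
  have hexp : ∀ a : ℝ, IntegrableOn (fun x : ℝ => Real.exp (-(s*x))) (Ioi a) := by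
    intro a; simpa [neg_mul] using exp_neg_integrableOn_Ioi a hs
  have hge : ∫ x in Ioi (0:ℝ), g x = 1 := by
    rw [setIntegral_eq_integral_of_forall_compl_eq_zero
      (fun x hx => hz x (by simpa using hx))]
    exact hone
  set L : ℝ := laplace g s with hLdef
  set QL : ℝ := ∫ x in Ioi (0:ℝ), Real.exp (-(s*x)) * Q x with hQLdef
  set I : ℝ := ∫ x in Ioi (0:ℝ), (g x / x) * (1 - Real.exp (-(s*x))) with hIdef
  -- integrability of translates
  have hsub : ∀ x : ℝ, Integrable (fun u => g (x - u)) volume := by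
    intro x
    exact ((Measure.measurePreserving_sub_left volume x).integrable_comp
      hm.aestronglyMeasurable).2 hgi
  have hconvInt : ∀ x : ℝ, Integrable (fun u => g (x - u) * Q u) volume := by
    intro x
    refine Integrable.mono' ((hsub x).const_mul C)
      ((hm.comp (measurable_const.sub measurable_id)).mul hQm).aestronglyMeasurable
      (ae_of_all _ fun u => ?_)
    rw [Real.norm_of_nonneg (mul_nonneg (h0 _) (hQ0 _)), mul_comm C]
    exact mul_le_mul_of_nonneg_left (hQle u) (h0 _)
  have hconvle : ∀ x : ℝ, (∫ u in Ioi (0:ℝ), g (x - u) * Q u) ≤ C := by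
    intro x
    calc (∫ u in Ioi (0:ℝ), g (x - u) * Q u) ≤ ∫ u in Ioi (0:ℝ), C * g (x - u) := by
          refine integral_mono_of_nonneg (ae_of_all _ fun u => mul_nonneg (h0 _) (hQ0 _))
            (((hsub x).const_mul C).restrict) (ae_of_all _ fun u => ?_)
          show g (x - u) * Q u ≤ C * g (x - u)
          rw [mul_comm C]
          exact mul_le_mul_of_nonneg_left (hQle u) (h0 _)
      _ ≤ ∫ u, C * g (x - u) := by
          exact setIntegral_le_integral ((hsub x).const_mul C)
            (ae_of_all _ fun u => mul_nonneg (integral_nonneg hq0) (h0 _))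
      _ = C * ∫ u, g (x - u) := integral_const_mul _ _
      _ = C := by rw [integral_sub_left_eq_self g volume x, hone, mul_one]
  have hC0 : (0:ℝ) ≤ C := integral_nonneg hq0
  have hB : (∫ s' in (0:ℝ)..s, laplace g s') = I := by
    rw [intervalIntegral.integral_of_le hs.le]
    have hmF : Measurable (Function.uncurry fun s' x : ℝ => Real.exp (-(s'*x)) * g x) :=
      ((measurable_fst.mul measurable_snd).neg.exp).mul (hm.comp measurable_snd)
    have hF : Integrable (Function.uncurry fun s' x : ℝ => Real.exp (-(s'*x)) * g x)
        ((volume.restrict (Ioc 0 s)).prod (volume.restrict (Ioi 0))) := by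
      rw [integrable_prod_iff hmF.aestronglyMeasurable]
      constructor
      · filter_upwards [ae_restrict_mem measurableSet_Ioc] with s' hs'
        refine Integrable.mono' hgi.restrict
          ((measurable_const.mul measurable_id).neg.exp.mul hm).aestronglyMeasurable ?_
        filter_upwards [ae_restrict_mem measurableSet_Ioi] with x hx
        show ‖Real.exp (-(s'*x)) * g x‖ ≤ g x
        rw [Real.norm_of_nonneg (mul_nonneg (Real.exp_pos _).le (h0 x))]
        exact mul_le_of_le_one_left (h0 x)
          (Real.exp_le_one_iff.2 (neg_nonpos.2 (mul_nonneg hs'.1.le (le_of_lt hx))))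
      · refine Integrable.mono'
          (show Integrable (fun _ : ℝ => (1:ℝ)) (volume.restrict (Ioc 0 s)) from
            (integrableOn_const_iff).2 (Or.inr measure_Ioc_lt_top))
          (hmF.norm.aestronglyMeasurable.integral_prod_right') ?_
        filter_upwards [ae_restrict_mem measurableSet_Ioc] with s' hs'
        rw [Real.norm_of_nonneg (integral_nonneg fun x => norm_nonneg _)]
        calc (∫ x in Ioi (0:ℝ), ‖Real.exp (-(s'*x)) * g x‖)
            ≤ ∫ x in Ioi (0:ℝ), g x := by
              refine integral_mono_of_nonneg (ae_of_all _ fun x => norm_nonneg _)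
                hgi.restrict ?_
              filter_upwards [ae_restrict_mem measurableSet_Ioi] with x hx
              show ‖Real.exp (-(s'*x)) * g x‖ ≤ g x
              rw [Real.norm_of_nonneg (mul_nonneg (Real.exp_pos _).le (h0 x))]
              exact mul_le_of_le_one_left (h0 x)
                (Real.exp_le_one_iff.2 (neg_nonpos.2 (mul_nonneg hs'.1.le (le_of_lt hx))))
          _ = 1 := hge
    have hswap := integral_integral_swap (f := fun s' x : ℝ => Real.exp (-(s'*x)) * g x)
        (μ := volume.restrict (Ioc 0 s)) (ν := volume.restrict (Ioi 0)) hF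
    calc (∫ s' in Ioc (0:ℝ) s, laplace g s')
        = ∫ s' in Ioc (0:ℝ) s, ∫ x in Ioi (0:ℝ), Real.exp (-(s'*x)) * g x := rfl
      _ = ∫ x in Ioi (0:ℝ), ∫ s' in Ioc (0:ℝ) s, Real.exp (-(s'*x)) * g x := hswap
      _ = I := by
          refine setIntegral_congr_fun measurableSet_Ioi fun x hx => ?_
          have hx0 : (0:ℝ) < x := hx
          calc (∫ s' in Ioc (0:ℝ) s, Real.exp (-(s'*x)) * g x)
              = (∫ s' in Ioc (0:ℝ) s, Real.exp (-(s'*x))) * g x := by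
                rw [integral_mul_const]
            _ = ((1 - Real.exp (-(s*x)))/x) * g x := by
                rw [← intervalIntegral.integral_of_le hs.le, exp_int (ne_of_gt hx0)]
            _ = (g x / x) * (1 - Real.exp (-(s*x))) := by ring
  have hA : QL = I / s := by
    set F : ℝ × ℝ → ℝ :=
      fun q => (Ioi q.1).indicator (fun v => Real.exp (-(s*q.1)) * (g v / v)) q.2 with hFdef
    have hFm : Measurable F := by
      have hFeq : F = Set.indicator {q : ℝ × ℝ | q.1 < q.2}
          (fun q => Real.exp (-(s*q.1)) * (g q.2 / q.2)) := by
        funext q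
        by_cases h : q.1 < q.2 <;>
          simp [hFdef, Set.indicator, h, Set.mem_Ioi, Set.mem_setOf_eq]
      rw [hFeq]
      exact (((measurable_fst.const_mul s).neg.exp).mul
        ((hm.comp measurable_snd).div measurable_snd)).indicator
        (measurableSet_lt measurable_fst measurable_snd)
    have hF0 : ∀ q, 0 ≤ F q := by
      intro q
      exact Set.indicator_nonneg (fun v _ => mul_nonneg (Real.exp_pos _).le (hq0 v)) _
    have hsec1 : ∀ x ∈ Ioi (0:ℝ), (∫ v in Ioi (0:ℝ), F (x, v)) = Real.exp (-(s*x)) * Q x := by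
      intro x hx
      have h1 : (fun v => F (x, v))
          = (Ioi x).indicator (fun v => Real.exp (-(s*x)) * (g v / v)) := rfl
      rw [h1, setIntegral_indicator measurableSet_Ioi,
        inter_eq_self_of_subset_right (Ioi_subset_Ioi (le_of_lt hx)),
        integral_const_mul]
    have hsec2 : ∀ v ∈ Ioi (0:ℝ),
        (∫ x in Ioi (0:ℝ), F (x, v)) = (g v / v) * ((1 - Real.exp (-(s*v)))/s) := by
      intro v hv
      have h1 : (fun x => F (x, v))
          = (Iio v).indicator (fun x => Real.exp (-(s*x)) * (g v / v)) := by
        funext x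
        by_cases h : x < v <;>
          simp [hFdef, Set.indicator, h, Set.mem_Ioi, Set.mem_Iio]
      rw [h1, setIntegral_indicator measurableSet_Iio, Set.Ioi_inter_Iio,
        integral_mul_const]
      have h2 : ∫ x in Ioo (0:ℝ) v, Real.exp (-(s*x)) = (1 - Real.exp (-(s*v)))/s := by
        rw [← integral_Ioc_eq_integral_Ioo, ← intervalIntegral.integral_of_le (le_of_lt hv)]
        have h3 := exp_int (ne_of_gt hs) v
        simpa [mul_comm] using h3
      rw [h2]; ring
    have hFint : Integrable F ((volume.restrict (Ioi 0)).prod (volume.restrict (Ioi 0))) := by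
      rw [integrable_prod_iff hFm.aestronglyMeasurable]
      constructor
      · filter_upwards [ae_restrict_mem measurableSet_Ioi] with x hx
        have h1 : (fun v => F (x, v))
            = (Ioi x).indicator (fun v => Real.exp (-(s*x)) * (g v / v)) := rfl
        rw [h1]
        exact ((hq.const_mul _).restrict).indicator measurableSet_Ioi
      · refine Integrable.mono' ((hexp 0).const_mul C)
          (hFm.norm.aestronglyMeasurable.integral_prod_right') ?_
        filter_upwards [ae_restrict_mem measurableSet_Ioi] with x hx
        rw [Real.norm_of_nonneg (integral_nonneg fun v => norm_nonneg _)]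
        have h1 : (∫ v in Ioi (0:ℝ), ‖F (x, v)‖) = ∫ v in Ioi (0:ℝ), F (x, v) :=
          norm_int_eq (fun v => hF0 _)
        rw [h1, hsec1 x hx]
        calc Real.exp (-(s*x)) * Q x ≤ Real.exp (-(s*x)) * C :=
              mul_le_mul_of_nonneg_left (hQle x) (Real.exp_pos _).le
          _ = C * Real.exp (-(s*x)) := mul_comm _ _
    have hswap := integral_integral_swap (f := fun x v : ℝ => F (x, v)) hFint
    calc QL = ∫ x in Ioi (0:ℝ), ∫ v in Ioi (0:ℝ), F (x, v) :=
          (setIntegral_congr_fun measurableSet_Ioi fun x hx => (hsec1 x hx).symm)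
      _ = ∫ v in Ioi (0:ℝ), ∫ x in Ioi (0:ℝ), F (x, v) := hswap
      _ = ∫ v in Ioi (0:ℝ), ((g v / v) * (1 - Real.exp (-(s*v))))/s :=
          setIntegral_congr_fun measurableSet_Ioi fun v hv => by rw [hsec2 v hv]; ring
      _ = I / s := integral_div _ _
  have hkey : ∀ u : ℝ, 0 < u →
      (∫ x in Ioi (0:ℝ), Real.exp (-(s*x)) * g (x - u)) = Real.exp (-(s*u)) * L := by
    intro u hu
    have h1 : ∀ x, x ∉ Ioi (0:ℝ) → Real.exp (-(s*x)) * g (x - u) = 0 := by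
      intro x hx
      simp only [mem_Ioi, not_lt] at hx
      rw [hz (x - u) (by linarith), mul_zero]
    rw [setIntegral_eq_integral_of_forall_compl_eq_zero h1]
    have h2 : (fun x => Real.exp (-(s*x)) * g (x - u))
        = fun x => (fun y => Real.exp (-(s*(y+u))) * g y) (x - u) := by
      funext x; simp [sub_add_cancel]
    rw [h2, integral_sub_right_eq_self (fun y => Real.exp (-(s*(y+u))) * g y) u]
    have h3 : (fun y => Real.exp (-(s*(y+u))) * g y)
        = fun y => Real.exp (-(s*u)) * (Real.exp (-(s*y)) * g y) := by
      funext y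
      rw [← mul_assoc, ← Real.exp_add]
      congr 2
      ring
    rw [h3, integral_const_mul]
    congr 1
    rw [hLdef]
    simp only [laplace]
    exact (setIntegral_eq_integral_of_forall_compl_eq_zero (fun y hy => by
      rw [hz y (by simpa using hy), mul_zero])).symm
  set F2 : ℝ × ℝ → ℝ := fun q => Real.exp (-(s*q.1)) * (g (q.1 - q.2) * Q q.2) with hF2def
  have hF2m : Measurable F2 :=
    ((measurable_fst.const_mul s).neg.exp).mul
      (((hm.comp (measurable_fst.sub measurable_snd))).mul (hQm.comp measurable_snd))
  have hF20 : ∀ q, 0 ≤ F2 q :=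
    fun q => mul_nonneg (Real.exp_pos _).le (mul_nonneg (h0 _) (hQ0 _))
  have hsecC : ∀ x : ℝ, (∫ u in Ioi (0:ℝ), F2 (x, u))
      = Real.exp (-(s*x)) * ∫ u in Ioi (0:ℝ), g (x - u) * Q u := by
    intro x
    rw [show (fun u => F2 (x, u)) = fun u => Real.exp (-(s*x)) * (g (x - u) * Q u) from rfl]
    exact integral_const_mul _ _
  have hF2int : Integrable F2 ((volume.restrict (Ioi 0)).prod (volume.restrict (Ioi 0))) := by
    rw [integrable_prod_iff hF2m.aestronglyMeasurable]
    constructor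
    · filter_upwards [ae_restrict_mem measurableSet_Ioi] with x hx
      have h1 : (fun u => F2 (x, u))
          = fun u => Real.exp (-(s*x)) * (g (x - u) * Q u) := rfl
      rw [h1]
      exact ((hconvInt x).restrict).const_mul _
    · refine Integrable.mono' ((hexp 0).const_mul C)
        (hF2m.norm.aestronglyMeasurable.integral_prod_right') ?_
      filter_upwards [ae_restrict_mem measurableSet_Ioi] with x hx
      rw [Real.norm_of_nonneg (integral_nonneg fun v => norm_nonneg _)]
      have h1 : (∫ u in Ioi (0:ℝ), ‖F2 (x, u)‖) = ∫ u in Ioi (0:ℝ), F2 (x, u) :=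
        norm_int_eq (fun u => hF20 _)
      rw [h1, hsecC x]
      calc Real.exp (-(s*x)) * ∫ u in Ioi (0:ℝ), g (x - u) * Q u
          ≤ Real.exp (-(s*x)) * C := mul_le_mul_of_nonneg_left (hconvle x) (Real.exp_pos _).le
        _ = C * Real.exp (-(s*x)) := mul_comm _ _
  have hC : (∫ x in Ioi (0:ℝ), Real.exp (-(s*x)) * ∫ u in Ioi (0:ℝ), g (x - u) * Q u)
      = L * QL := by
    have hswap := integral_integral_swap (f := fun x u : ℝ => F2 (x, u)) hF2int
    calc (∫ x in Ioi (0:ℝ), Real.exp (-(s*x)) * ∫ u in Ioi (0:ℝ), g (x - u) * Q u)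
        = ∫ x in Ioi (0:ℝ), ∫ u in Ioi (0:ℝ), F2 (x, u) :=
          setIntegral_congr_fun measurableSet_Ioi fun x hx => (hsecC x).symm
      _ = ∫ u in Ioi (0:ℝ), ∫ x in Ioi (0:ℝ), F2 (x, u) := hswap
      _ = ∫ u in Ioi (0:ℝ), L * (Real.exp (-(s*u)) * Q u) := by
          refine setIntegral_congr_fun measurableSet_Ioi fun u hu => ?_
          have h1 : (fun x => F2 (x, u)) = fun x => Q u * (Real.exp (-(s*x)) * g (x - u)) := by
            funext x; simp only [hF2def]; ring
          rw [h1, integral_const_mul, hkey u hu]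
          ring
      _ = L * QL := integral_const_mul _ _
  have hTconv : ∀ x ∈ Ioi (0:ℝ),
      (∫ u in (0:ℝ)..x, g (x - u) * Q u) = ∫ u in Ioi (0:ℝ), g (x - u) * Q u := by
    intro x hx
    have hx0 : (0:ℝ) < x := hx
    rw [intervalIntegral.integral_of_le hx0.le, ← Ioc_union_Ioi_eq_Ioi hx0.le,
      setIntegral_union (Set.Ioc_disjoint_Ioi le_rfl) measurableSet_Ioi
        ((hconvInt x).integrableOn) ((hconvInt x).integrableOn)]
    have hzero : (∫ u in Ioi x, g (x - u) * Q u) = 0 := by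
      rw [setIntegral_congr_fun measurableSet_Ioi
        (fun u (hu : u ∈ Ioi x) => by
          rw [hz (x - u) (by simp only [mem_Ioi] at hu; linarith), zero_mul])]
      exact integral_zero _ _
    rw [hzero, add_zero]
  have hint1 : IntegrableOn
      (fun x => Real.exp (-(s*x)) * ∫ u in Ioi (0:ℝ), g (x - u) * Q u) (Ioi (0:ℝ)) := by
    have h1 := hF2int.integral_prod_left
    have h2 : (fun x => ∫ u in Ioi (0:ℝ), F2 (x, u))
        = fun x => Real.exp (-(s*x)) * ∫ u in Ioi (0:ℝ), g (x - u) * Q u := by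
      funext x; exact hsecC x
    rw [← h2]
    exact h1
  have hint2 : IntegrableOn (fun x => Real.exp (-(s*x)) * Q x) (Ioi (0:ℝ)) := by
    refine Integrable.mono' ((hexp 0).const_mul C)
      (((measurable_id.const_mul s).neg.exp.mul hQm).aestronglyMeasurable) ?_
    refine ae_of_all _ fun x => ?_
    rw [Real.norm_of_nonneg (mul_nonneg (Real.exp_pos _).le (hQ0 _))]
    calc Real.exp (-(s*x)) * Q x ≤ Real.exp (-(s*x)) * C :=
          mul_le_mul_of_nonneg_left (hQle x) (Real.exp_pos _).le
      _ = C * Real.exp (-(s*x)) := mul_comm _ _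
  rw [hB]
  calc laplace (T g) s
      = ∫ x in Ioi (0:ℝ), ((1/2) * (Real.exp (-(s*x)) * ∫ u in Ioi (0:ℝ), g (x - u) * Q u)
          + (1/2) * (Real.exp (-(s*x)) * Q x)) := by
        simp only [laplace]
        refine setIntegral_congr_fun measurableSet_Ioi fun x hx => ?_
        simp only [T]
        rw [show (∫ u in (0:ℝ)..x, g (x - u) * ∫ v in Ioi u, g v / v)
            = ∫ u in (0:ℝ)..x, g (x - u) * Q u from rfl, hTconv x hx]
        ring
    _ = (1/2) * (L * QL) + (1/2) * QL := by
        rw [integral_add (hint1.const_mul _) (hint2.const_mul _), integral_const_mul,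
          integral_const_mul, hC]
    _ = (1 / (2 * s)) * (L + 1) * I := by
        rw [hA]
        field_simp




theorem laplace_of_T (p : ℝ → ℝ)
    (hint : IntegrableOn p (Ioi 0))
    (hpos : ∀ᵐ x ∂(volume.restrict (Ioi (0:ℝ))), 0 ≤ p x)
    (hone : ∫ x in Ioi (0:ℝ), p x = 1)
    (hquot : IntegrableOn (fun u => p u / u) (Ioi 0)) :
    ∀ s : ℝ, 0 < s →
      laplace (T p) s = (1 / (2 * s)) * (laplace p s + 1) * ∫ s' in (0:ℝ)..s, laplace p s' := by
  intro s hs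
  have hsm := hint.aestronglyMeasurable
  set p' : ℝ → ℝ := hsm.mk p with hp'def
  have hp'm : StronglyMeasurable p' := hsm.stronglyMeasurable_mk
  have hpp' : p =ᵐ[volume.restrict (Ioi 0)] p' := hsm.ae_eq_mk
  set g : ℝ → ℝ := (Ioi 0).indicator (fun x => max (p' x) 0) with hgdef
  have hgm : Measurable g :=
    (hp'm.measurable.max measurable_const).indicator measurableSet_Ioi
  have hg0 : ∀ x, 0 ≤ g x := fun x =>
    Set.indicator_nonneg (fun y _ => le_max_right _ _) x
  have hgz : ∀ x, x ≤ 0 → g x = 0 := fun x hx =>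
    Set.indicator_of_notMem (by simpa using hx) _
  have hfae : (fun x => max (p' x) 0) =ᵐ[volume.restrict (Ioi 0)] p := by
    filter_upwards [hpp', hpos] with x h1 h2
    rw [← h1, max_eq_left h2]
  have hgp : g =ᵐ[volume.restrict (Ioi 0)] p := by
    filter_upwards [hfae, ae_restrict_mem measurableSet_Ioi] with x h1 h2
    rw [hgdef]
    simp only [Set.indicator_of_mem h2]
    exact h1
  have hgi : Integrable g :=
    (integrable_indicator_iff measurableSet_Ioi).2 (hint.congr hfae.symm)
  have hgone : ∫ x, g x = 1 := by
    rw [hgdef, integral_indicator measurableSet_Ioi, integral_congr_ae hfae, hone]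
  have hgq : Integrable (fun u => g u / u) := by
    have h1 : (fun u => g u / u) = (Ioi 0).indicator (fun u => max (p' u) 0 / u) := by
      funext u
      by_cases h : u ∈ Ioi 0
      · rw [hgdef]; simp [Set.indicator_of_mem h]
      · rw [hgdef]; simp [Set.indicator_of_notMem h]
    rw [h1]
    refine (integrable_indicator_iff measurableSet_Ioi).2 (hquot.congr ?_)
    filter_upwards [hfae] with u h2
    rw [h2]
  have hlap : ∀ s' : ℝ, laplace g s' = laplace p s' := by
    intro s'
    exact integral_congr_ae (by filter_upwards [hgp] with x h1; rw [h1])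
  have hae : ∀ᵐ u : ℝ ∂volume, u ∈ Ioi (0:ℝ) → g u = p u :=
    (ae_restrict_iff' measurableSet_Ioi).1 hgp
  have hQeq : ∀ u : ℝ, 0 < u → (∫ v in Ioi u, g v / v) = ∫ v in Ioi u, p v / v := by
    intro u hu
    refine integral_congr_ae ?_
    have h1 : ∀ᵐ v ∂volume.restrict (Ioi u), v ∈ Ioi (0:ℝ) → g v = p v :=
      ae_restrict_of_ae hae
    filter_upwards [h1, ae_restrict_mem measurableSet_Ioi] with v h2 h3
    rw [h2 (mem_Ioi.2 (hu.trans h3))]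
  have hTeq : ∀ x ∈ Ioi (0:ℝ), T g x = T p x := by
    intro x hx
    have hx0 : (0:ℝ) < x := hx
    simp only [T]
    congr 1
    · congr 1
      refine intervalIntegral.integral_congr_ae ?_
      have hae2 : ∀ᵐ u : ℝ ∂volume, x - u ∈ Ioi (0:ℝ) → g (x - u) = p (x - u) :=
        (Measure.measurePreserving_sub_left volume x).quasiMeasurePreserving.ae hae
      have hne : ∀ᵐ u : ℝ ∂volume, u ≠ x := by
        have hset : {a : ℝ | ¬ a ≠ x} = {x} := by ext a; simp [not_not]
        rw [ae_iff, hset]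
        exact measure_singleton x
      filter_upwards [hae2, hne] with u h2 h3 h4
      have h5 : u ∈ Ioc 0 x := by rwa [Set.uIoc_of_le hx0.le] at h4
      have h6 : (0:ℝ) < x - u := by
        rcases lt_or_eq_of_le h5.2 with h | h
        · linarith
        · exact absurd h h3
      rw [h2 (mem_Ioi.2 h6), hQeq u h5.1]
    · congr 1
      exact hQeq x hx0
  have hmain := main_g g hgm hg0 hgz hgi hgone hgq hs
  have hTlap : laplace (T g) s = laplace (T p) s := by
    simp only [laplace]
    refine setIntegral_congr_fun measurableSet_Ioi fun x hx => ?_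
    rw [hTeq x hx]
  rw [← hTlap, hmain]
  simp only [hlap]
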